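/- Let F be a number field with a ring automorphism ρ satisfying σ ∘ ρ = conj ∘ σ for every ring homomorphism σ : F → ℂ, let Φ be a CM-type of F, and let ζ ∈ F satisfy ρ(ζ) = −ζ. Then for all x, y ∈ F, the image in ℂ of Tr_{F/ℚ}(ζ · x · ρ(y)) equals Σ_{σ ∈ Φ} σ(ζ) · ( σ(x) · conj(σ(y)) − conj(σ(x)) · σ(y) ). -/

import Mathlib

/-- A field is totally real if every ring homomorphism to `ℂ` has image in `ℝ`. -/
def IsTotallyRealField (F : Type*) [Field F] : Prop :=
  ∀ σ : F →+* ℂ, ∀ x : F, ∃ r : ℝ, σ x = (r : ℂ)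

/-- A field is totally imaginary if it admits no real embedding. -/
def IsTotallyImaginary (F : Type*) [Field F] : Prop :=
  IsEmpty (F →+* ℝ)

/-- A number field is a CM-field if it is totally imaginary and is a quadratic
extension of a totally real subfield. -/
def IsCMField (F : Type*) [Field F] : Prop :=
  IsTotallyImaginary F ∧
    ∃ K : Subfield F, IsTotallyRealField K ∧ Module.finrank K F = 2

/-- A CM-type on `F`: a set of embeddings `F → ℂ` containing exactly one of each
conjugate pair. -/
def IsCMType (F : Type*) [Field F] (Φ : Set (F →+* ℂ)) : Prop :=
  ∀ σ : F →+* ℂ, Xor' (σ ∈ Φ) (σ ∈ (fun τ : F →+* ℂ => (starRingEnd ℂ).comp τ) '' Φ)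

/-- The trace form `E(x,y) = Tr_{F/ℚ}(ζ·x·ρ(y))`, computed in `ℂ`, equals the sum over
the CM-type `Φ` of `σ(ζ)·(σ(x)·conj(σ(y)) - conj(σ(x))·σ(y))`. -/
theorem trace_form_eq_sum_over_CMType
    (F : Type*) [Field F] [NumberField F] (ρ : F ≃+* F)
    (hconj : ∀ σ : F →+* ℂ, ∀ x : F, σ (ρ x) = (starRingEnd ℂ) (σ x))
    (Φ : Set (F →+* ℂ)) (hΦ : IsCMType F Φ)
    (ζ : F) (hζ : ρ ζ = -ζ) :
    ∀ x y : F,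
      algebraMap ℚ ℂ (Algebra.trace ℚ F (ζ * x * ρ y)) =
        ∑ᶠ σ ∈ Φ, σ ζ * (σ x * (starRingEnd ℂ) (σ y) - (starRingEnd ℂ) (σ x) * σ y) := by
  intro x y
  haveI := Classical.decEq (F →+* ℂ)
  set f : (F →+* ℂ) → (F →+* ℂ) := fun τ => (starRingEnd ℂ).comp τ with hf
  have hfinj : Function.Injective f := by
    intro a b h
    ext z
    have := RingHom.congr_fun h z
    simpa [hf] using congrArg (starRingEnd ℂ) this
  set g : (F →+* ℂ) → ℂ := fun σ => σ (ζ * x * ρ y) with hg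
  set S : Finset (F →+* ℂ) := Φ.toFinite.toFinset with hS
  have hSmem : ∀ σ, σ ∈ S ↔ σ ∈ Φ := fun σ => Φ.toFinite.mem_toFinset
  -- trace as sum over all embeddings
  have h1 : algebraMap ℚ ℂ (Algebra.trace ℚ F (ζ * x * ρ y)) = ∑ σ : F →+* ℂ, g σ := by
    rw [trace_eq_sum_embeddings ℂ (x := ζ * x * ρ y)]
    exact Fintype.sum_equiv (RingHom.equivRatAlgHom F ℂ).symm _ _ (fun σ => rfl)
  -- universe decomposes as S ∪ f '' S
  have hdisj : Disjoint S (S.image f) := by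
    rw [Finset.disjoint_left]
    intro σ h1' h2'
    have hmem : σ ∈ f '' Φ := by
      obtain ⟨τ, hτ, hτ2⟩ := Finset.mem_image.mp h2'
      exact ⟨τ, (hSmem τ).mp hτ, hτ2⟩
    rcases hΦ σ with ⟨_, hn⟩ | ⟨_, hn⟩
    · exact hn hmem
    · exact hn ((hSmem σ).mp h1')
  have huniv : Finset.univ = S ∪ S.image f := by
    ext σ
    simp only [Finset.mem_univ, true_iff, Finset.mem_union]
    rcases hΦ σ with ⟨h, _⟩ | ⟨h, _⟩
    · exact Or.inl ((hSmem σ).mpr h)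
    · obtain ⟨τ, hτ, hτ2⟩ := h
      exact Or.inr (Finset.mem_image.mpr ⟨τ, (hSmem τ).mpr hτ, hτ2⟩)
  have h2 : ∑ σ : F →+* ℂ, g σ = ∑ σ ∈ S, g σ + ∑ σ ∈ S, g (f σ) := by
    rw [huniv, Finset.sum_union hdisj,
      Finset.sum_image (fun a _ b _ h => hfinj h)]
  have h3 : ∑ σ ∈ S, g σ + ∑ σ ∈ S, g (f σ) =
      ∑ σ ∈ S, σ ζ * (σ x * (starRingEnd ℂ) (σ y) - (starRingEnd ℂ) (σ x) * σ y) := by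
    rw [← Finset.sum_add_distrib]
    refine Finset.sum_congr rfl fun σ _ => ?_
    have hconjζ : (starRingEnd ℂ) (σ ζ) = -σ ζ := by
      rw [← hconj σ ζ, hζ, map_neg]
    have hgσ : g σ = σ ζ * σ x * (starRingEnd ℂ) (σ y) := by
      simp [hg, hconj σ y, map_mul]
    have hgfσ : g (f σ) = -σ ζ * (starRingEnd ℂ) (σ x) * σ y := by
      simp only [hg, hf, RingHom.coe_comp, Function.comp_apply, map_mul, hconj σ y,
        Complex.conj_conj, hconjζ]
    rw [hgσ, hgfσ]; ring
  have h4 : ∑ᶠ σ ∈ Φ, σ ζ * (σ x * (starRingEnd ℂ) (σ y) - (starRingEnd ℂ) (σ x) * σ y) =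
      ∑ σ ∈ S, σ ζ * (σ x * (starRingEnd ℂ) (σ y) - (starRingEnd ℂ) (σ x) * σ y) := by
    rw [← Φ.toFinite.coe_toFinset, finsum_mem_coe_finset]
  rw [h1, h2, h3, h4]
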